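/- For every positive integer n, the determinant of the n×n matrix whose (j,k) entry is |j-k| equals (-1)^(n-1)·(n-1)·2^(n-2). -/

import Mathlib

open Matrix

private def Bm (N : ℕ) : Matrix (Fin (N+2)) (Fin (N+2)) ℤ :=
  fun r k => if (r:ℕ) = 0 then (k:ℤ) else if (k:ℕ) < (r:ℕ) then 1 else -1

private def Cm (N : ℕ) : Matrix (Fin (N+2)) (Fin (N+2)) ℤ :=
  fun r k => if (r:ℕ) = 0 then (k:ℤ) else if (r:ℕ) = 1 then (if (k:ℕ) = 0 then 1 else -1)
    else (if (k:ℕ)+1 = (r:ℕ) then 2 else 0)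

private lemma step1 (N : ℕ) :
    Matrix.det (Matrix.of fun j k : Fin (N+2) => |((j : ℤ) - (k : ℤ))|) = (Bm N).det := by
  apply Matrix.det_eq_of_forall_row_eq_smul_add_pred (fun _ => 1)
  · intro j
    simp only [of_apply, Bm, Fin.val_zero, if_true, eq_self_iff_true, Nat.cast_zero]
    rw [zero_sub, abs_neg, abs_of_nonneg (by positivity)]
  · intro i j
    simp only [of_apply, Bm, Fin.val_succ, Fin.coe_castSucc]
    rw [if_neg (Nat.succ_ne_zero _)]
    push_cast
    rcases abs_cases (((i:ℤ)+1) - (j:ℤ)) with ⟨h1, h1'⟩ | ⟨h1, h1'⟩ <;>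
      rcases abs_cases ((i:ℤ) - (j:ℤ)) with ⟨h2, h2'⟩ | ⟨h2, h2'⟩ <;>
      rw [h1, h2] <;> split_ifs <;> first | exact absurd ‹False› id | omega

private lemma step2 (N : ℕ) : (Bm N).det = (Cm N).det := by
  apply Matrix.det_eq_of_forall_row_eq_smul_add_pred (fun i => if (i:ℕ) = 0 then 0 else 1)
  · intro j
    simp only [Bm, Cm, Fin.val_zero, if_true, eq_self_iff_true]
  · intro i j
    simp only [Bm, Cm, Fin.val_succ, Fin.coe_castSucc]
    split_ifs <;> first | exact absurd ‹False› id | omega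

private lemma val_succAbove_one (N : ℕ) (s : Fin (N+1)) :
    (((Fin.succ (0 : Fin (N+1))).succAbove s : Fin (N+2)) : ℕ) =
      if (s:ℕ) = 0 then 0 else (s:ℕ)+1 := by
  rw [Fin.succAbove]
  have h1 : ((Fin.succ (0 : Fin (N+1))) : ℕ) = 1 := rfl
  split_ifs with h2 h3 h3
  · simp_all
  · exfalso; rw [Fin.lt_def, Fin.coe_castSucc, h1] at h2; omega
  · exfalso; apply h2; rw [Fin.lt_def, Fin.coe_castSucc, h1]; omega
  · simp

private lemma step3 (N : ℕ) :
    (Cm N).det = (-1)^(N+1) * ((N:ℤ)+1) * 2^N := by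
  rw [Matrix.det_succ_column_zero, Fin.sum_univ_succ, Fin.sum_univ_succ]
  have hC00 : (Cm N) 0 0 = 0 := by simp [Cm]
  have hC10 : (Cm N) (Fin.succ 0) (0 : Fin (N+2)) = 1 := by
    simp [Cm, Fin.val_succ]
  have hrest : ∀ i : Fin N, (Cm N) i.succ.succ (0 : Fin (N+2)) = 0 := by
    intro i
    simp only [Cm, Fin.val_succ, Fin.val_zero]
    split_ifs <;> omega
  rw [hC00, hC10]
  simp only [hrest, mul_zero, zero_mul, mul_one, Finset.sum_const_zero, add_zero, zero_add]
  set M := (Cm N).submatrix (Fin.succ (0 : Fin (N+1))).succAbove Fin.succ with hM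
  have hrow0 : (((Fin.succ (0 : Fin (N+1))).succAbove 0 : Fin (N+2)) : ℕ) = 0 := by
    rw [val_succAbove_one]; simp
  have hrowsucc : ∀ s : Fin N, (((Fin.succ (0 : Fin (N+1))).succAbove s.succ : Fin (N+2)) : ℕ)
      = (s:ℕ)+2 := by
    intro s
    rw [val_succAbove_one]
    simp [Fin.val_succ]
  have hM0last : M 0 (Fin.last N) = (N:ℤ)+1 := by
    simp only [hM, Matrix.submatrix_apply, Cm, hrow0, Fin.val_succ, Fin.val_last]
    norm_num
  have hMs : ∀ s : Fin N, M s.succ (Fin.last N) = 0 := by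
    intro s
    simp only [hM, Matrix.submatrix_apply, Cm, hrowsucc, Fin.val_succ, Fin.val_last]
    rw [if_neg (by omega), if_neg (by omega), if_neg (by omega)]
  have hdetM : M.det = (-1)^N * ((N:ℤ)+1) * 2^N := by
    rw [Matrix.det_succ_column M (Fin.last N), Fin.sum_univ_succ]
    simp only [hMs, mul_zero, zero_mul, Finset.sum_const_zero, add_zero]
    rw [hM0last]
    have hM2 : M.submatrix (0 : Fin (N+1)).succAbove (Fin.last N).succAbove = (2:ℤ) • 1 := by
      ext a b
      simp only [Fin.succAbove_zero, Fin.succAbove_last, Matrix.submatrix_apply, hM, Cm,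
        hrowsucc, Fin.val_succ, Fin.coe_castSucc, Matrix.smul_apply, Matrix.one_apply,
        smul_eq_mul]
      split_ifs <;> simp_all [Fin.ext_iff] <;> omega
    rw [hM2, Matrix.det_smul, Matrix.det_one, Fintype.card_fin]
    simp [Fin.val_last]
  rw [hdetM]
  have h1 : ((Fin.succ (0 : Fin (N+1))) : ℕ) = 1 := rfl
  rw [h1]
  ring

theorem stmt_0 (n : ℕ) (hn : 0 < n) :
    Matrix.det (Matrix.of fun j k : Fin n => |((j : ℤ) - (k : ℤ))|) =
      (-1) ^ (n - 1) * ((n : ℤ) - 1) * 2 ^ (n - 2) := by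
  match n, hn with
  | 1, _ => simp [Matrix.det_fin_one]
  | (N+2), _ =>
    rw [step1, step2, step3]
    push_cast
    ring_nf
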